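/- Any nonzero group homomorphism h : Z_2^γ × Z_4^δ → Z_4 satisfies: the sum over all x in Z_2^γ × Z_4^δ of the Lee weight of h(x) equals 2^{γ+2δ} (where Lee weight of 0,1,2,3 is 0,1,2,1). -/

import Mathlib

def leeWt (a : ZMod 4) : ℕ := if a = 0 then 0 else if a = 2 then 2 else 1

lemma hI4 : Complex.I ^ 4 = 1 := by
  norm_num [pow_succ, Complex.I_mul_I]

lemma hI4' : (-Complex.I) ^ 4 = 1 := by
  norm_num [pow_succ, Complex.I_mul_I]

lemma lee_key (a : ZMod 4) :
    (leeWt a : ℂ) * 2 = 2 - Complex.I ^ a.val - (-Complex.I) ^ a.val := by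
  rcases (by decide : ∀ b : ZMod 4, b = 0 ∨ b = 1 ∨ b = 2 ∨ b = 3) a with rfl | rfl | rfl | rfl <;>
    simp [leeWt, pow_succ, Complex.I_mul_I, (show (1:ZMod 4) ≠ 0 by decide), (show (1:ZMod 4) ≠ 2 by decide),
      (show (2:ZMod 4) ≠ 0 by decide), (show (3:ZMod 4) ≠ 0 by decide),
      (show (3:ZMod 4) ≠ 2 by decide), (show (2:ZMod 4).val = 2 from rfl),
      (show (3:ZMod 4).val = 3 from rfl), (show (1:ZMod 4).val = 1 from rfl)] <;>
    ring_nf <;>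
    norm_num [Complex.ext_iff, (show (1:ZMod 4) ≠ 0 by decide), (show (1:ZMod 4) ≠ 2 by decide),
      (show (2:ZMod 4) ≠ 0 by decide), (show (3:ZMod 4) ≠ 0 by decide),
      (show (3:ZMod 4) ≠ 2 by decide)]

lemma ne_one_of_ne_zero (a : ZMod 4) (ha : a ≠ 0) :
    Complex.I ^ a.val ≠ 1 ∧ (-Complex.I) ^ a.val ≠ 1 := by
  fin_cases a <;>
    simp_all [pow_succ, Complex.I_mul_I, Complex.ext_iff, ZMod.val] <;> norm_num
  exact ha rfl

theorem stmt4 (γ δ : ℕ) (h : ((Fin γ → ZMod 2) × (Fin δ → ZMod 4)) →+ ZMod 4)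
    (hne : h ≠ 0) :
    ∑ x : (Fin γ → ZMod 2) × (Fin δ → ZMod 4), leeWt (h x) = 2 ^ (γ + 2 * δ) := by
  set G := (Fin γ → ZMod 2) × (Fin δ → ZMod 4)
  obtain ⟨x₀, hx₀⟩ : ∃ x : G, h x ≠ 0 := by
    by_contra hc
    push_neg at hc
    exact hne (AddMonoidHom.ext fun x => hc x)
  -- two characters
  set χ : AddChar G ℂ := (AddChar.zmodChar 4 hI4).compAddMonoidHom h with hχ
  set χ' : AddChar G ℂ := (AddChar.zmodChar 4 hI4').compAddMonoidHom h with hχ'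
  have hχne : χ ≠ 0 :=
    AddChar.ne_one_iff.mpr ⟨x₀, by
      simpa [hχ, AddChar.zmodChar_apply] using (ne_one_of_ne_zero _ hx₀).1⟩
  have hχ'ne : χ' ≠ 0 :=
    AddChar.ne_one_iff.mpr ⟨x₀, by
      simpa [hχ', AddChar.zmodChar_apply] using (ne_one_of_ne_zero _ hx₀).2⟩
  have hs1 : ∑ x : G, χ x = 0 := AddChar.sum_eq_zero_iff_ne_zero.mpr hχne
  have hs2 : ∑ x : G, χ' x = 0 := AddChar.sum_eq_zero_iff_ne_zero.mpr hχ'ne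
  have key : ((∑ x : G, leeWt (h x) : ℕ) : ℂ) * 2 = (Fintype.card G : ℂ) * 2 := by
    push_cast
    rw [Finset.sum_mul]
    have : ∀ x : G, (leeWt (h x) : ℂ) * 2 = 2 - χ x - χ' x := by
      intro x
      simpa [hχ, hχ', AddChar.zmodChar_apply] using lee_key (h x)
    rw [Finset.sum_congr rfl fun x _ => this x, Finset.sum_sub_distrib,
      Finset.sum_sub_distrib, hs1, hs2]
    simp [Finset.card_univ, mul_comm]
  have hnat : (∑ x : G, leeWt (h x)) = Fintype.card G := by
    have := mul_right_cancel₀ (two_ne_zero) key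
    exact_mod_cast this
  rw [hnat]
  simp only [G, Fintype.card_prod, Fintype.card_fun, ZMod.card, Fintype.card_fin]
  rw [pow_add, pow_mul]
  norm_num
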